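/- Suppose α, β, γ, δ, σ > 0 and γδ > ασ, and set a := γδ/σ − α. Then the equilibrium (δ/α, 0) of the damped predator–prey system is not Lyapunov stable: there exists r > 0 such that for every ε > 0 there is a differentiable solution (x, y) : [0,∞) → ℝ² of ẋ = δ − αx − βxy, ẏ = γxy − σy with ‖(x(0), y(0)) − (δ/α, 0)‖ < ε and with ‖(x(t), y(t)) − (δ/α, 0)‖ ≥ r for some t ≥ 0. -/

import Mathlib

open Set Metric Real Filter Topology

namespace DampedPPAux

variable (α β γ δ σ : ℝ)

/-- The vector field of the damped predator-prey system. -/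
def vf : ℝ × ℝ → ℝ × ℝ := fun p => (δ - α * p.1 - β * p.1 * p.2, γ * p.1 * p.2 - σ * p.2)

/-- Bound for the field on a ball. -/
def Cb (M : ℝ) : ℝ := δ + (α + σ) * M + (β + γ) * M ^ 2

/-- Lipschitz constant on a ball. -/
def Lc (M : ℝ) : ℝ := α + σ + 2 * (β + γ) * M

variable {α β γ δ σ}

lemma norm_vf_le (hα : 0 ≤ α) (hβ : 0 ≤ β) (hγ : 0 ≤ γ) (hδ : 0 ≤ δ) (hσ : 0 ≤ σ)
    {M : ℝ} (hM : 0 ≤ M) {p : ℝ × ℝ} (hp : ‖p‖ ≤ M) :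
    ‖vf α β γ δ σ p‖ ≤ Cb α β γ δ σ M := by
  have h1 : |p.1| ≤ M := le_trans (by rw [Prod.norm_def]; exact (le_max_left _ _).trans_eq' (Real.norm_eq_abs _).symm) hp
  have h2 : |p.2| ≤ M := le_trans (by rw [Prod.norm_def]; exact (le_max_right _ _).trans_eq' (Real.norm_eq_abs _).symm) hp
  have h1' := abs_nonneg p.1
  have h2' := abs_nonneg p.2
  have e1 : |p.1 * p.2| ≤ M ^ 2 := by
    rw [abs_mul]; nlinarith
  rw [vf, Prod.norm_def, Cb]
  apply max_le
  · rw [Real.norm_eq_abs]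
    have : |δ - α * p.1 - β * (p.1 * p.2)| ≤ |δ| + |α| * |p.1| + |β| * |p.1 * p.2| := by
      calc |δ - α * p.1 - β * (p.1 * p.2)| ≤ |δ - α * p.1| + |β * (p.1 * p.2)| := by
            rw [sub_eq_add_neg (δ - α * p.1)]; exact (abs_add_le _ _).trans (by rw [abs_neg])
        _ ≤ |δ| + |α * p.1| + |β * (p.1 * p.2)| := by
            have := (abs_sub _ _ : |δ - α * p.1| ≤ |δ| + |α * p.1|)
            linarith
        _ = |δ| + |α| * |p.1| + |β| * |p.1 * p.2| := by rw [abs_mul, abs_mul]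
    have hδ' : |δ| = δ := abs_of_nonneg hδ
    have hα' : |α| = α := abs_of_nonneg hα
    have hβ' : |β| = β := abs_of_nonneg hβ
    simp only [show δ - α * p.1 - β * p.1 * p.2 = δ - α * p.1 - β * (p.1 * p.2) by ring] 
    nlinarith [abs_nonneg (p.1 * p.2)]
  · rw [Real.norm_eq_abs]
    have : |γ * (p.1 * p.2) - σ * p.2| ≤ |γ| * |p.1 * p.2| + |σ| * |p.2| := by
      calc |γ * (p.1 * p.2) - σ * p.2| ≤ |γ * (p.1 * p.2)| + |σ * p.2| := abs_sub _ _
        _ = |γ| * |p.1 * p.2| + |σ| * |p.2| := by rw [abs_mul γ, abs_mul σ]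
    have hγ' : |γ| = γ := abs_of_nonneg hγ
    have hσ' : |σ| = σ := abs_of_nonneg hσ
    simp only [show γ * p.1 * p.2 - σ * p.2 = γ * (p.1 * p.2) - σ * p.2 by ring]
    nlinarith [abs_nonneg (p.1 * p.2)]


lemma lip_vf (hα : 0 ≤ α) (hβ : 0 ≤ β) (hγ : 0 ≤ γ) (hσ : 0 ≤ σ)
    {M : ℝ} (hM : 0 ≤ M) :
    LipschitzOnWith (Lc α β γ σ M).toNNReal (vf α β γ δ σ) (closedBall 0 M) := by
  have hL : 0 ≤ Lc α β γ σ M := by unfold Lc; positivity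
  rw [lipschitzOnWith_iff_dist_le_mul]
  intro p hp q hq
  rw [mem_closedBall_zero_iff, Prod.norm_def] at hp hq
  have hp1 : |p.1| ≤ M := le_trans (le_max_left _ _) (by simpa [Real.norm_eq_abs] using hp)
  have hp2 : |p.2| ≤ M := le_trans (le_max_right _ _) (by simpa [Real.norm_eq_abs] using hp)
  have hq1 : |q.1| ≤ M := le_trans (le_max_left _ _) (by simpa [Real.norm_eq_abs] using hq)
  have hq2 : |q.2| ≤ M := le_trans (le_max_right _ _) (by simpa [Real.norm_eq_abs] using hq)
  have hd1 : |p.1 - q.1| ≤ dist p q := by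
    rw [Prod.dist_eq]; exact le_trans (le_of_eq (Real.dist_eq _ _).symm) (le_max_left _ _)
  have hd2 : |p.2 - q.2| ≤ dist p q := by
    rw [Prod.dist_eq]; exact le_trans (le_of_eq (Real.dist_eq _ _).symm) (le_max_right _ _)
  have hdist : (0:ℝ) ≤ dist p q := dist_nonneg
  have key : |p.1 * p.2 - q.1 * q.2| ≤ 2 * M * dist p q := by
    have : p.1 * p.2 - q.1 * q.2 = p.1 * (p.2 - q.2) + q.2 * (p.1 - q.1) := by ring
    rw [this]
    calc |p.1 * (p.2 - q.2) + q.2 * (p.1 - q.1)|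
        ≤ |p.1 * (p.2 - q.2)| + |q.2 * (p.1 - q.1)| := abs_add_le _ _
      _ = |p.1| * |p.2 - q.2| + |q.2| * |p.1 - q.1| := by rw [abs_mul, abs_mul]
      _ ≤ 2 * M * dist p q := by nlinarith [abs_nonneg p.1, abs_nonneg q.2, abs_nonneg (p.2-q.2), abs_nonneg (p.1-q.1)]
  rw [Real.coe_toNNReal _ hL, Prod.dist_eq]
  apply max_le
  · rw [Real.dist_eq, vf, vf]
    have e : (δ - α * p.1 - β * p.1 * p.2) - (δ - α * q.1 - β * q.1 * q.2)
        = -(α * (p.1 - q.1)) - β * (p.1 * p.2 - q.1 * q.2) := by ring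
    simp only []
    rw [e]
    calc |(-(α * (p.1 - q.1)) - β * (p.1 * p.2 - q.1 * q.2))|
        ≤ |α * (p.1 - q.1)| + |β * (p.1 * p.2 - q.1 * q.2)| := by
          refine le_trans (abs_sub _ _) ?_
          rw [abs_neg]
      _ = α * |p.1 - q.1| + β * |p.1 * p.2 - q.1 * q.2| := by
          rw [abs_mul, abs_mul, abs_of_nonneg hα, abs_of_nonneg hβ]
      _ ≤ Lc α β γ σ M * dist p q := by
          unfold Lc; nlinarith [abs_nonneg (p.1*p.2 - q.1*q.2)]
  · rw [Real.dist_eq, vf, vf]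
    have e : (γ * p.1 * p.2 - σ * p.2) - (γ * q.1 * q.2 - σ * q.2)
        = γ * (p.1 * p.2 - q.1 * q.2) - σ * (p.2 - q.2) := by ring
    simp only []
    rw [e]
    calc |γ * (p.1 * p.2 - q.1 * q.2) - σ * (p.2 - q.2)|
        ≤ |γ * (p.1 * p.2 - q.1 * q.2)| + |σ * (p.2 - q.2)| := abs_sub _ _
      _ = γ * |p.1 * p.2 - q.1 * q.2| + σ * |p.2 - q.2| := by
          rw [abs_mul, abs_mul, abs_of_nonneg hγ, abs_of_nonneg hσ]
      _ ≤ Lc α β γ σ M * dist p q := by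
          unfold Lc; nlinarith [abs_nonneg (p.1*p.2 - q.1*q.2)]


variable (α β γ δ σ) in
/-- Uniform local time step on the ball of radius `M`. -/
noncomputable def hstep (M : ℝ) : ℝ := 1 / (Cb α β γ δ σ (M + 1) + 1)

lemma Cb_nonneg (hα : 0 ≤ α) (hβ : 0 ≤ β) (hγ : 0 ≤ γ) (hδ : 0 ≤ δ) (hσ : 0 ≤ σ)
    {M : ℝ} (hM : 0 ≤ M) : 0 ≤ Cb α β γ δ σ M := by unfold Cb; positivity

lemma hstep_pos (hα : 0 ≤ α) (hβ : 0 ≤ β) (hγ : 0 ≤ γ) (hδ : 0 ≤ δ) (hσ : 0 ≤ σ)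
    {M : ℝ} (hM : 0 ≤ M) : 0 < hstep α β γ δ σ M := by
  have := Cb_nonneg hα hβ hγ hδ hσ (by linarith : (0:ℝ) ≤ M + 1) (α := α) (β := β) (γ := γ) (δ := δ) (σ := σ)
  unfold hstep; positivity

lemma local_sol (hα : 0 ≤ α) (hβ : 0 ≤ β) (hγ : 0 ≤ γ) (hδ : 0 ≤ δ) (hσ : 0 ≤ σ)
    {M t₁ : ℝ} {p : ℝ × ℝ} (hM : 0 ≤ M) (hp : ‖p‖ ≤ M) :
    ∃ g : ℝ → ℝ × ℝ, g t₁ = p ∧ ∀ t ∈ Icc t₁ (t₁ + hstep α β γ δ σ M),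
      HasDerivWithinAt g (vf α β γ δ σ (g t)) (Icc t₁ (t₁ + hstep α β γ δ σ M)) t := by
  have hM1 : (0:ℝ) ≤ M + 1 := by linarith
  have hCb : 0 ≤ Cb α β γ δ σ (M + 1) := Cb_nonneg hα hβ hγ hδ hσ hM1
  have hh : 0 < hstep α β γ δ σ M := hstep_pos hα hβ hγ hδ hσ hM
  have hsub : closedBall p 1 ⊆ closedBall (0 : ℝ × ℝ) (M + 1) := by
    intro q hq
    rw [mem_closedBall_zero_iff]
    rw [mem_closedBall, dist_eq_norm] at hq
    calc ‖q‖ = ‖q - p + p‖ := by rw [sub_add_cancel]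
      _ ≤ ‖q - p‖ + ‖p‖ := norm_add_le _ _
      _ ≤ 1 + M := add_le_add hq hp
      _ = M + 1 := by ring
  have hpl : IsPicardLindelof (fun _ q => vf α β γ δ σ q) (tmin := t₁)
      (tmax := t₁ + hstep α β γ δ σ M) ⟨t₁, le_refl _, by linarith⟩ p 1 0
      (Cb α β γ δ σ (M + 1)).toNNReal (Lc α β γ σ (M + 1)).toNNReal := by
    constructor
    · intro t _
      rw [NNReal.coe_one]
      exact (lip_vf hα hβ hγ hσ hM1).mono hsub
    · intro x _
      exact continuousOn_const
    · intro t _ x hx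
      rw [NNReal.coe_one] at hx
      rw [Real.coe_toNNReal _ hCb]
      exact norm_vf_le hα hβ hγ hδ hσ hM1 (mem_closedBall_zero_iff.mp (hsub hx))
    · have : max (t₁ + hstep α β γ δ σ M - t₁) (t₁ - t₁) = hstep α β γ δ σ M := by
        rw [max_eq_left] <;> simp [hh.le]
      simp only [Subtype.coe_mk, NNReal.coe_one, NNReal.coe_zero, sub_zero,
        Real.coe_toNNReal _ hCb, this]
      unfold hstep
      rw [mul_one_div, div_le_one (by linarith)]
      linarith
  obtain ⟨f, hf0, hf⟩ := hpl.exists_eq_forall_mem_Icc_hasDerivWithinAt₀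
  exact ⟨f, hf0, hf⟩


lemma hasDerivWithinAt_singleton'' {E : Type*} [NormedAddCommGroup E] [NormedSpace ℝ E]
    (f : ℝ → E) (d : E) (t : ℝ) : HasDerivWithinAt f d {t} t := by
  rw [hasDerivWithinAt_iff_tendsto_slope]
  simp

lemma hasDerivWithinAt_fst {f : ℝ → ℝ × ℝ} {d : ℝ × ℝ} {s : Set ℝ} {t : ℝ}
    (h : HasDerivWithinAt f d s t) : HasDerivWithinAt (fun u => (f u).1) d.1 s t := by
  simpa [Function.comp_def] using (ContinuousLinearMap.fst ℝ ℝ ℝ).hasFDerivAt.comp_hasDerivWithinAt t h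

lemma hasDerivWithinAt_snd {f : ℝ → ℝ × ℝ} {d : ℝ × ℝ} {s : Set ℝ} {t : ℝ}
    (h : HasDerivWithinAt f d s t) : HasDerivWithinAt (fun u => (f u).2) d.2 s t := by
  simpa [Function.comp_def] using (ContinuousLinearMap.snd ℝ ℝ ℝ).hasFDerivAt.comp_hasDerivWithinAt t h

lemma Icc_mem_nhdsWithin_Ici' {a b t : ℝ} (h : t ∈ Ico a b) : Icc a b ∈ 𝓝[Ici t] t := by
  refine mem_nhdsWithin.mpr ⟨Iio b, isOpen_Iio, h.2, ?_⟩
  rintro u ⟨hu1, hu2⟩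
  exact ⟨h.1.trans hu2, le_of_lt hu1⟩

lemma Icc_mem_nhdsWithin_Iic' {a b t : ℝ} (h : t ∈ Ioc a b) : Icc a b ∈ 𝓝[Iic t] t := by
  refine mem_nhdsWithin.mpr ⟨Ioi a, isOpen_Ioi, h.1, ?_⟩
  rintro u ⟨hu1, hu2⟩
  exact ⟨le_of_lt hu1, hu2.trans h.2⟩

/-- A priori bounds for solutions starting at `(δ/α, y0)`. -/
lemma apriori (hα : 0 < α) (hβ : 0 < β) (hγ : 0 < γ) (hδ : 0 < δ) (hσ : 0 < σ)
    {T y0 : ℝ} (hT : 0 ≤ T) (hy0 : 0 < y0) {f : ℝ → ℝ × ℝ}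
    (hf0 : f 0 = (δ / α, y0))
    (hf : ∀ t ∈ Icc 0 T, HasDerivWithinAt f (vf α β γ δ σ (f t)) (Icc 0 T) t) :
    ∀ t ∈ Icc 0 T, (0 < (f t).1 ∧ (f t).1 ≤ δ / α) ∧
      (0 < (f t).2 ∧ (f t).2 ≤ y0 * Real.exp (γ * (δ / α) * t)) := by
  set x : ℝ → ℝ := fun u => (f u).1 with hxdef
  set y : ℝ → ℝ := fun u => (f u).2 with hydef
  have hx0 : x 0 = δ / α := by simp only [hxdef, hf0]
  have hy0' : y 0 = y0 := by simp only [hydef, hf0]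
  have hx : ∀ t ∈ Icc 0 T, HasDerivWithinAt x (δ - α * x t - β * x t * y t) (Icc 0 T) t := by
    intro t ht
    simpa [vf] using hasDerivWithinAt_fst (hf t ht)
  have hy : ∀ t ∈ Icc 0 T, HasDerivWithinAt y (γ * x t * y t - σ * y t) (Icc 0 T) t := by
    intro t ht
    simpa [vf] using hasDerivWithinAt_snd (hf t ht)
  have hxc : ContinuousOn x (Icc 0 T) := fun t ht => (hx t ht).continuousWithinAt
  have hyc : ContinuousOn y (Icc 0 T) := fun t ht => (hy t ht).continuousWithinAt
  -- positivity of y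
  have ypos : ∀ t ∈ Icc 0 T, 0 < y t := by
    by_contra hcon
    push_neg at hcon
    obtain ⟨t₁, ht₁, ht₁y⟩ := hcon
    -- find an exact zero
    have : ∃ s ∈ Icc (0:ℝ) t₁, y s = 0 := by
      have hsub : Icc (0:ℝ) t₁ ⊆ Icc 0 T := Icc_subset_Icc le_rfl ht₁.2
      have h0 : (0:ℝ) ∈ Icc (y t₁) (y 0) := ⟨ht₁y, by rw [hy0']; exact hy0.le⟩
      have := intermediate_value_Icc' ht₁.1 (hyc.mono hsub) h0
      obtain ⟨s, hs, hs0⟩ := this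
      exact ⟨s, hs, hs0⟩
    obtain ⟨s, hs, hsy⟩ := this
    have hsT : s ∈ Icc 0 T := ⟨hs.1, hs.2.trans ht₁.2⟩
    have hspos : 0 < s := by
      rcases eq_or_lt_of_le hs.1 with h | h
      · exfalso; rw [← h] at hsy; rw [hy0'] at hsy; linarith
      · exact h
    -- uniqueness for the linear equation ẏ = k(t) y backwards from y s = 0
    obtain ⟨Kx, hKx⟩ := (isCompact_Icc : IsCompact (Icc (0:ℝ) s)).exists_bound_of_continuousOn
      (hxc.mono (Icc_subset_Icc le_rfl hsT.2))
    set k : ℝ → ℝ := fun t => γ * x (max 0 (min t s)) - σ with hkdef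
    have hKx0 : 0 ≤ Kx := le_trans (norm_nonneg _) (hKx 0 ⟨le_rfl, hspos.le⟩)
    have hkb : ∀ t, |k t| ≤ γ * Kx + σ := by
      intro t
      have hmem : max 0 (min t s) ∈ Icc (0:ℝ) s :=
        ⟨le_max_left _ _, max_le hspos.le (min_le_right _ _)⟩
      have := hKx _ hmem
      rw [Real.norm_eq_abs] at this
      rw [hkdef]
      have : |γ * x (max 0 (min t s))| ≤ γ * Kx := by
        rw [abs_mul, abs_of_nonneg hγ.le]
        exact mul_le_mul_of_nonneg_left this hγ.le
      calc |γ * x (max 0 (min t s)) - σ| ≤ |γ * x (max 0 (min t s))| + |σ| := abs_sub _ _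
        _ ≤ γ * Kx + σ := by rw [abs_of_nonneg hσ.le]; linarith
    have hvlip : ∀ t, LipschitzOnWith (γ * Kx + σ).toNNReal (fun z : ℝ => k t * z) univ := by
      intro t
      apply LipschitzWith.lipschitzOnWith
      apply LipschitzWith.of_dist_le_mul
      intro z w
      rw [Real.dist_eq, Real.dist_eq, ← mul_sub, abs_mul,
        Real.coe_toNNReal _ (by positivity)]
      exact mul_le_mul_of_nonneg_right (hkb t) (abs_nonneg _)
    have huniq := ODE_solution_unique_of_mem_Icc_left (fun t _ => hvlip t)
      (f := y) (g := fun _ => (0:ℝ)) (a := 0) (b := s)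
      (hyc.mono (Icc_subset_Icc le_rfl hsT.2))
      (fun t ht => by
        have htT : t ∈ Icc 0 T := ⟨ht.1.le, ht.2.trans hsT.2⟩
        have hd := hy t htT
        have hmono : HasDerivWithinAt y (γ * x t * y t - σ * y t) (Iic t) t :=
          hd.mono_of_mem_nhdsWithin (Icc_mem_nhdsWithin_Iic' ⟨lt_of_lt_of_le ht.1 le_rfl, htT.2⟩)
        have hclamp : (0:ℝ) ⊔ (t ⊓ s) = t := by
          rw [min_eq_left ht.2, max_eq_right ht.1.le]
        have heq : k t * y t = γ * x t * y t - σ * y t := by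
          simp only [hkdef, hclamp]; ring
        rwa [heq])
      (fun t _ => mem_univ _)
      continuousOn_const
      (fun t ht => by rw [mul_zero]; exact hasDerivWithinAt_const t (Iic t) (0:ℝ))
      (fun t _ => mem_univ _)
      (show y s = (fun _ => (0:ℝ)) s from hsy)
    have hcontra : y0 = 0 := by
      have h00 := huniq (show (0:ℝ) ∈ Icc (0:ℝ) s from ⟨le_rfl, hspos.le⟩)
      rw [hy0'] at h00
      simpa using h00
    linarith
  -- positivity of x
  have xpos : ∀ t ∈ Icc 0 T, 0 < x t := by
    by_contra hcon
    push_neg at hcon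
    obtain ⟨t₁, ht₁, ht₁x⟩ := hcon
    -- there is an exact zero of x
    have hex : ∃ s ∈ Icc (0:ℝ) t₁, x s = 0 := by
      have hsub : Icc (0:ℝ) t₁ ⊆ Icc 0 T := Icc_subset_Icc le_rfl ht₁.2
      have h0 : (0:ℝ) ∈ Icc (x t₁) (x 0) := ⟨ht₁x, by rw [hx0]; positivity⟩
      obtain ⟨s, hs, hs0⟩ := intermediate_value_Icc' ht₁.1 (hxc.mono hsub) h0
      exact ⟨s, hs, hs0⟩
    set Z : Set ℝ := {u | u ∈ Icc 0 T ∧ x u = 0} with hZdef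
    have hZne : Z.Nonempty := by
      obtain ⟨s, hs, hs0⟩ := hex
      exact ⟨s, ⟨hs.1, hs.2.trans ht₁.2⟩, hs0⟩
    have hZclosed : IsClosed Z := by
      have : Z = Icc 0 T ∩ x ⁻¹' {0} := by
        ext u; simp [hZdef, Set.mem_setOf_eq]
      rw [this]
      exact hxc.preimage_isClosed_of_isClosed isClosed_Icc isClosed_singleton
    have hZbdd : BddBelow Z := ⟨0, fun u hu => hu.1.1⟩
    set s₀ := sInf Z with hs₀def
    have hs₀Z : s₀ ∈ Z := hZclosed.csInf_mem hZne hZbdd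
    have hs₀T : s₀ ∈ Icc 0 T := hs₀Z.1
    have hxs₀ : x s₀ = 0 := hs₀Z.2
    have hs₀pos : 0 < s₀ := by
      rcases eq_or_lt_of_le hs₀T.1 with h | h
      · exfalso; rw [← h] at hxs₀; rw [hx0] at hxs₀
        have : (0:ℝ) < δ / α := by positivity
        linarith
      · exact h
    have posbefore : ∀ u ∈ Ico (0:ℝ) s₀, 0 < x u := by
      intro u hu
      have huT : u ∈ Icc 0 T := ⟨hu.1, hu.2.le.trans hs₀T.2⟩
      rcases lt_trichotomy (x u) 0 with h | h | h
      · exfalso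
        have h0 : (0:ℝ) ∈ Icc (x u) (x 0) := ⟨h.le, by rw [hx0]; positivity⟩
        obtain ⟨w, hw, hw0⟩ := intermediate_value_Icc' hu.1
          (hxc.mono (Icc_subset_Icc le_rfl huT.2)) h0
        have : s₀ ≤ w := csInf_le hZbdd ⟨⟨hw.1, hw.2.trans huT.2⟩, hw0⟩
        have : w < s₀ := lt_of_le_of_lt hw.2 hu.2
        linarith
      · exfalso
        have : s₀ ≤ u := csInf_le hZbdd ⟨huT, h⟩
        linarith [hu.2]
      · exact h
    -- derivative of x at s₀ is δ > 0, so x is negative shortly before s₀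
    have hd : HasDerivWithinAt x δ (Icc 0 s₀) s₀ := by
      have := (hx s₀ hs₀T).mono (Icc_subset_Icc le_rfl hs₀T.2)
      rw [hxs₀] at this
      simpa using this
    rw [hasDerivWithinAt_iff_tendsto_slope] at hd
    have hIco : Icc (0:ℝ) s₀ \ {s₀} = Ico 0 s₀ := Icc_sdiff_right
    rw [hIco] at hd
    haveI : (𝓝[Ico (0:ℝ) s₀] s₀).NeBot := by
      apply mem_closure_iff_nhdsWithin_neBot.mp
      rw [closure_Ico (ne_of_lt hs₀pos)]
      exact ⟨hs₀pos.le, le_rfl⟩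
    have hev : ∀ᶠ u in 𝓝[Ico (0:ℝ) s₀] s₀, 0 < slope x s₀ u :=
      hd.eventually (lt_mem_nhds hδ)
    have hmem : ∀ᶠ u in 𝓝[Ico (0:ℝ) s₀] s₀, u ∈ Ico (0:ℝ) s₀ :=
      eventually_mem_nhdsWithin
    obtain ⟨u,hu1, hu2⟩ := (hev.and hmem).exists
    rw [slope_def_field, hxs₀, sub_zero] at hu1
    have hneg : u - s₀ < 0 := by linarith [hu2.2]
    have : x u < 0 := by
      by_contra hge
      push_neg at hge
      have : x u / (u - s₀) ≤ 0 := div_nonpos_of_nonneg_of_nonpos hge hneg.le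
      linarith
    linarith [posbefore u hu2]
  -- upper bound for x
  have xle : ∀ t ∈ Icc 0 T, x t ≤ δ / α := by
    have key := le_gronwallBound_of_liminf_deriv_right_le
      (f := fun u => x u - δ / α) (f' := fun u => δ - α * x u - β * x u * y u)
      (δ := 0) (K := -α) (ε := 0) (a := 0) (b := T)
      (hxc.sub continuousOn_const)
      (fun u hu r hr => by
        have hder : HasDerivWithinAt (fun w => x w - δ / α)
            (δ - α * x u - β * x u * y u) (Ici u) u :=
          ((hx u ⟨hu.1, hu.2.le⟩).sub_const _).mono_of_mem_nhdsWithin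
            (Icc_mem_nhdsWithin_Ici' hu)
        have := hder.liminf_right_slope_le hr
        refine this.mono fun z hz => ?_
        rwa [slope_def_field, div_eq_inv_mul] at hz)
      (show x 0 - δ / α ≤ 0 by rw [hx0]; simp)
      (fun u hu => by
        have hxu := xpos u ⟨hu.1, hu.2.le⟩
        have hyu := ypos u ⟨hu.1, hu.2.le⟩
        show δ - α * x u - β * x u * y u ≤ -α * (x u - δ / α) + 0
        have hda : α * (δ / α) = δ := mul_div_cancel₀ δ (ne_of_gt hα)
        nlinarith [mul_pos (mul_pos hβ hxu) hyu])
    intro t ht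
    have := key t ht
    rw [gronwallBound_ε0] at this
    simp only [zero_mul] at this
    linarith
  -- upper bound for y
  have yle : ∀ t ∈ Icc 0 T, y t ≤ y0 * Real.exp (γ * (δ / α) * t) := by
    have key := le_gronwallBound_of_liminf_deriv_right_le
      (f := y) (f' := fun u => γ * x u * y u - σ * y u)
      (δ := y0) (K := γ * (δ / α)) (ε := 0) (a := 0) (b := T)
      hyc
      (fun u hu r hr => by
        have hder : HasDerivWithinAt y (γ * x u * y u - σ * y u) (Ici u) u :=
          (hy u ⟨hu.1, hu.2.le⟩).mono_of_mem_nhdsWithin (Icc_mem_nhdsWithin_Ici' hu)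
        have := hder.liminf_right_slope_le hr
        refine this.mono fun z hz => ?_
        rwa [slope_def_field, div_eq_inv_mul] at hz)
      (le_of_eq hy0')
      (fun u hu => by
        have hxu := xle u ⟨hu.1, hu.2.le⟩
        have hyu := ypos u ⟨hu.1, hu.2.le⟩
        have h1 : γ * x u ≤ γ * (δ / α) := mul_le_mul_of_nonneg_left hxu hγ.le
        nlinarith)
    intro t ht
    have := key t ht
    rw [gronwallBound_ε0] at this
    rw [sub_zero] at this
    exact this
  intro t ht
  exact ⟨⟨xpos t ht, xle t ht⟩, ⟨ypos t ht, yle t ht⟩⟩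


/-- Norm bound from the a priori bounds. -/
lemma apriori_norm (hα : 0 < α) (hβ : 0 < β) (hγ : 0 < γ) (hδ : 0 < δ) (hσ : 0 < σ)
    {T y0 : ℝ} (hT : 0 ≤ T) (hy0 : 0 < y0) {f : ℝ → ℝ × ℝ}
    (hf0 : f 0 = (δ / α, y0))
    (hf : ∀ t ∈ Icc 0 T, HasDerivWithinAt f (vf α β γ δ σ (f t)) (Icc 0 T) t) :
    ∀ t ∈ Icc 0 T, ‖f t‖ ≤ max (δ / α) (y0 * Real.exp (γ * (δ / α) * T)) := by
  intro t ht
  obtain ⟨⟨hx1, hx2⟩, ⟨hy1, hy2⟩⟩ := apriori hα hβ hγ hδ hσ hT hy0 hf0 hf t ht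
  rw [Prod.norm_def]
  apply max_le_max <;> rw [Real.norm_eq_abs]
  · rw [abs_of_pos hx1]; exact hx2
  · rw [abs_of_pos hy1]
    refine hy2.trans ?_
    have : γ * (δ / α) * t ≤ γ * (δ / α) * T := by
      apply mul_le_mul_of_nonneg_left ht.2
      positivity
    exact mul_le_mul_of_nonneg_left (Real.exp_le_exp.mpr this) hy0.le

/-- Existence of a solution on `[0, T]` for arbitrary `T ≥ 0`. -/
lemma exists_sol_Icc (hα : 0 < α) (hβ : 0 < β) (hγ : 0 < γ) (hδ : 0 < δ) (hσ : 0 < σ)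
    {T y0 : ℝ} (hT : 0 ≤ T) (hy0 : 0 < y0) :
    ∃ f : ℝ → ℝ × ℝ, f 0 = (δ / α, y0) ∧
      ∀ t ∈ Icc 0 T, HasDerivWithinAt f (vf α β γ δ σ (f t)) (Icc 0 T) t := by
  set M : ℝ := max (δ / α) (y0 * Real.exp (γ * (δ / α) * T)) with hMdef
  have hM : 0 ≤ M := le_trans (by positivity) (le_max_left _ _)
  set h := hstep α β γ δ σ M with hhdef
  have hh : 0 < h := hstep_pos hα.le hβ.le hγ.le hδ.le hσ.le hM
  have claim : ∀ n : ℕ, ∃ f : ℝ → ℝ × ℝ, f 0 = (δ / α, y0) ∧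
      ∀ t ∈ Icc 0 (min (n * h) T),
        HasDerivWithinAt f (vf α β γ δ σ (f t)) (Icc 0 (min (n * h) T)) t := by
    intro n
    induction n with
    | zero =>
      refine ⟨fun _ => (δ / α, y0), rfl, ?_⟩
      intro t ht
      simp only [Nat.cast_zero, zero_mul, min_eq_left hT, Icc_self, mem_singleton_iff] at ht
      subst ht
      simp only [Nat.cast_zero, zero_mul, min_eq_left hT, Icc_self]
      exact hasDerivWithinAt_singleton'' _ _ _
    | succ n ih =>
      obtain ⟨f, hf0, hf⟩ := ih
      by_cases hTle : T ≤ n * h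
      · have h1 : min ((n:ℝ) * h) T = T := min_eq_right hTle
        have h2 : min (((n:ℕ) + 1 : ℕ) * h) T = T := by
          apply min_eq_right
          push_cast
          nlinarith
        rw [h2]
        rw [h1] at hf
        exact ⟨f, hf0, hf⟩
      · push_neg at hTle
        set m : ℝ := (n : ℝ) * h with hmdef
        have hm0 : 0 ≤ m := by positivity
        have hmin : min m T = m := min_eq_left hTle.le
        rw [hmin] at hf
        set m' : ℝ := min (((n:ℕ) + 1 : ℕ) * h) T with hm'def
        have hm'1 : m ≤ m' := by
          apply le_min _ hTle.le
          push_cast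
          nlinarith
        have hm'2 : m' ≤ m + h := by
          refine (min_le_left _ _).trans ?_
          push_cast
          nlinarith
        have hm'0 : 0 ≤ m' := le_trans hm0 hm'1
        -- bound the endpoint
        have hbound : ‖f m‖ ≤ M := by
          have := apriori_norm hα hβ hγ hδ hσ hm0 hy0 hf0 hf m ⟨hm0, le_rfl⟩
          refine this.trans ?_
          apply max_le_max le_rfl
          apply mul_le_mul_of_nonneg_left _ hy0.le
          apply Real.exp_le_exp.mpr
          apply mul_le_mul_of_nonneg_left hTle.le
          positivity
        obtain ⟨g, hg0, hg⟩ := local_sol hα.le hβ.le hγ.le hδ.le hσ.le (t₁ := m) hM hbound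
        rw [← hhdef] at hg
        set F : ℝ → ℝ × ℝ := fun t => if t ≤ m then f t else g t with hFdef
        have hFeqf : ∀ u, u ≤ m → F u = f u := fun u hu => if_pos hu
        have hFeqg : ∀ u ∈ Icc m (m + h), F u = g u := by
          intro u hu
          by_cases hum : u ≤ m
          · have : u = m := le_antisymm hum hu.1
            rw [this]
            rw [hFeqf m le_rfl, hg0]
          · exact if_neg hum
        refine ⟨F, by rw [hFeqf 0 hm0]; exact hf0, ?_⟩
        intro t ht
        rcases lt_trichotomy t m with htm | htm | htm
        · -- t < m : use f
          have htmem : t ∈ Icc 0 m := ⟨ht.1, htm.le⟩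
          have hmemJ : Icc (0:ℝ) m ∈ 𝓝[Icc 0 m'] t := by
            refine mem_nhdsWithin.mpr ⟨Iio m, isOpen_Iio, htm, ?_⟩
            rintro u ⟨hu1, hu2⟩
            exact ⟨hu2.1, le_of_lt hu1⟩
          have hd := (hf t htmem).mono_of_mem_nhdsWithin hmemJ
          have hev : F =ᶠ[𝓝[Icc 0 m'] t] f := by
            filter_upwards [mem_nhdsWithin_of_mem_nhds (Iio_mem_nhds htm)] with u hu
            exact hFeqf u (le_of_lt hu)
          have := hd.congr_of_eventuallyEq hev (hFeqf t htm.le)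
          rwa [hFeqf t htm.le]
        · -- t = m : glue the two one-sided derivatives
          subst htm
          have part1 : HasDerivWithinAt F (vf α β γ δ σ (f m)) (Icc 0 m) m :=
            (hf m ⟨hm0, le_rfl⟩).congr (fun u hu => hFeqf u hu.2) (hFeqf m le_rfl)
          have part2 : HasDerivWithinAt F (vf α β γ δ σ (f m)) (Icc m (m + h)) m := by
            have hd := hg m ⟨le_rfl, by linarith⟩
            rw [hg0] at hd
            exact hd.congr (fun u hu => hFeqg u hu) (hFeqg m ⟨le_rfl, by linarith⟩)
          have hunion := part1.union part2
          rw [Icc_union_Icc_eq_Icc hm0 (by linarith : m ≤ m + h)] at hunion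
          have hfin := hunion.mono (Icc_subset_Icc le_rfl hm'2)
          rwa [hFeqf m le_rfl]
        · -- t > m : use g
          have htmem : t ∈ Icc m (m + h) := ⟨htm.le, ht.2.trans hm'2⟩
          have hmemJ : Icc m (m + h) ∈ 𝓝[Icc 0 m'] t := by
            refine mem_nhdsWithin.mpr ⟨Ioi m, isOpen_Ioi, htm, ?_⟩
            rintro u ⟨hu1, hu2⟩
            exact ⟨le_of_lt hu1, hu2.2.trans hm'2⟩
          have hd := (hg t htmem).mono_of_mem_nhdsWithin hmemJ
          have hFt : F t = g t := if_neg (not_le.mpr htm)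
          have hev : F =ᶠ[𝓝[Icc 0 m'] t] g := by
            filter_upwards [mem_nhdsWithin_of_mem_nhds (Ioi_mem_nhds htm)] with u hu
            exact if_neg (not_le.mpr hu)
          have := hd.congr_of_eventuallyEq hev hFt
          rwa [hFt]
  -- choose n large enough
  obtain ⟨f, hf0, hf⟩ := claim ⌈T / h⌉₊
  have : T ≤ (⌈T / h⌉₊ : ℝ) * h := by
    rw [← div_le_iff₀ hh]
    exact Nat.le_ceil _
  rw [min_eq_right this] at hf
  exact ⟨f, hf0, hf⟩


/-- Uniqueness of solutions with the given initial condition. -/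
lemma sol_unique (hα : 0 < α) (hβ : 0 < β) (hγ : 0 < γ) (hδ : 0 < δ) (hσ : 0 < σ)
    {T y0 : ℝ} (hT : 0 ≤ T) (hy0 : 0 < y0) {f g : ℝ → ℝ × ℝ}
    (hf0 : f 0 = (δ / α, y0))
    (hf : ∀ t ∈ Icc 0 T, HasDerivWithinAt f (vf α β γ δ σ (f t)) (Icc 0 T) t)
    (hg0 : g 0 = (δ / α, y0))
    (hg : ∀ t ∈ Icc 0 T, HasDerivWithinAt g (vf α β γ δ σ (g t)) (Icc 0 T) t) :
    EqOn f g (Icc 0 T) := by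
  set M : ℝ := max (δ / α) (y0 * Real.exp (γ * (δ / α) * T)) with hMdef
  have hM : 0 ≤ M := le_trans (by positivity) (le_max_left _ _)
  apply ODE_solution_unique_of_mem_Icc_right
    (v := fun _ p => vf α β γ δ σ p) (s := fun _ => closedBall (0 : ℝ × ℝ) M)
    (K := (Lc α β γ σ M).toNNReal)
    (fun _ _ => lip_vf hα.le hβ.le hγ.le hσ.le hM)
    (fun t ht => (hf t ht).continuousWithinAt)
    (fun t ht => (hf t ⟨ht.1, ht.2.le⟩).mono_of_mem_nhdsWithin (Icc_mem_nhdsWithin_Ici' ht))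
    (fun t ht => mem_closedBall_zero_iff.mpr
      (apriori_norm hα hβ hγ hδ hσ hT hy0 hf0 hf t ⟨ht.1, ht.2.le⟩))
    (fun t ht => (hg t ht).continuousWithinAt)
    (fun t ht => (hg t ⟨ht.1, ht.2.le⟩).mono_of_mem_nhdsWithin (Icc_mem_nhdsWithin_Ici' ht))
    (fun t ht => mem_closedBall_zero_iff.mpr
      (apriori_norm hα hβ hγ hδ hσ hT hy0 hg0 hg t ⟨ht.1, ht.2.le⟩))
    (hf0.trans hg0.symm)

/-- Global solution on `[0, ∞)`, with a two-sided derivative everywhere `t ≥ 0`. -/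
lemma exists_global (hα : 0 < α) (hβ : 0 < β) (hγ : 0 < γ) (hδ : 0 < δ) (hσ : 0 < σ)
    {y0 : ℝ} (hy0 : 0 < y0) :
    ∃ F : ℝ → ℝ × ℝ, F 0 = (δ / α, y0) ∧
      ∀ t, 0 ≤ t → HasDerivAt F (vf α β γ δ σ (F t)) t := by
  have hex : ∀ n : ℕ, ∃ f : ℝ → ℝ × ℝ, f 0 = (δ / α, y0) ∧
      ∀ t ∈ Icc 0 (n : ℝ), HasDerivWithinAt f (vf α β γ δ σ (f t)) (Icc 0 (n : ℝ)) t :=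
    fun n => exists_sol_Icc hα hβ hγ hδ hσ (Nat.cast_nonneg n) hy0
  set sol : ℕ → ℝ → ℝ × ℝ := fun n => (hex n).choose with hsoldef
  have hsol0 : ∀ n, sol n 0 = (δ / α, y0) := fun n => (hex n).choose_spec.1
  have hsolD : ∀ n : ℕ, ∀ t ∈ Icc 0 (n : ℝ),
      HasDerivWithinAt (sol n) (vf α β γ δ σ (sol n t)) (Icc 0 (n : ℝ)) t :=
    fun n => (hex n).choose_spec.2
  have agree : ∀ n N : ℕ, n ≤ N → EqOn (sol n) (sol N) (Icc 0 (n : ℝ)) := by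
    intro n N hnN
    have hsub : Icc (0:ℝ) n ⊆ Icc 0 N := Icc_subset_Icc le_rfl (by exact_mod_cast hnN)
    exact sol_unique hα hβ hγ hδ hσ (Nat.cast_nonneg n) hy0 (hsol0 n) (hsolD n) (hsol0 N)
      (fun t ht => ((hsolD N) t (hsub ht)).mono hsub)
  set d : ℝ × ℝ := vf α β γ δ σ (δ / α, y0) with hddef
  set F : ℝ → ℝ × ℝ := fun t => if t < 0 then (δ / α, y0) + t • d else sol (⌊t⌋₊ + 1) t
    with hFdef
  have lem1 : ∀ (N : ℕ) (t : ℝ), 0 ≤ t → t ≤ N → F t = sol N t := by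
    intro N t ht0 htN
    have hnotneg : ¬ t < 0 := not_lt.mpr ht0
    have hFt : F t = sol (⌊t⌋₊ + 1) t := if_neg hnotneg
    rw [hFt]
    have htfl : t ≤ ((⌊t⌋₊ + 1 : ℕ) : ℝ) := by
      push_cast
      exact (Nat.lt_floor_add_one t).le
    rcases le_total (⌊t⌋₊ + 1) N with hle | hle
    · exact agree _ N hle ⟨ht0, htfl⟩
    · exact (agree N _ hle ⟨ht0, htN⟩).symm
  have hF0 : F 0 = (δ / α, y0) := by
    rw [lem1 1 0 le_rfl (by norm_num)]
    exact hsol0 1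
  refine ⟨F, hF0, ?_⟩
  intro t ht
  rcases eq_or_lt_of_le ht with h0 | h0
  · -- t = 0 : two-sided derivative from the linear extension and the solution
    subst h0
    have partL : HasDerivWithinAt F d (Iic 0) 0 := by
      have lin : HasDerivAt (fun u : ℝ => (δ / α, y0) + u • d) d 0 := by
        have h1 : HasDerivAt (fun u : ℝ => u • d) ((1:ℝ) • d) 0 :=
          (hasDerivAt_id 0).smul_const d
        simpa using h1.const_add ((δ / α, y0) : ℝ × ℝ)
      refine lin.hasDerivWithinAt.congr (fun u hu => ?_) ?_
      · rcases lt_or_eq_of_le (mem_Iic.mp hu) with h | h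
        · exact if_pos h
        · subst h; rw [hF0]; simp
      · rw [hF0]; simp
    have partR : HasDerivWithinAt F d (Ici 0) 0 := by
      have hd1 := hsolD 1 0 ⟨le_rfl, by norm_num⟩
      rw [hsol0 1] at hd1
      have hd2 : HasDerivWithinAt (sol 1) d (Ici 0) 0 := by
        rw [hddef]
        exact hd1.mono_of_mem_nhdsWithin (Icc_mem_nhdsWithin_Ici' ⟨le_rfl, by norm_num⟩)
      refine hd2.congr_of_eventuallyEq ?_ (by rw [hF0, hsol0 1])
      have hmem : Ico (0:ℝ) 1 ∈ 𝓝[Ici (0:ℝ)] 0 := by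
        refine mem_nhdsWithin.mpr ⟨Iio 1, isOpen_Iio, by norm_num, ?_⟩
        rintro u ⟨hu1, hu2⟩
        exact ⟨hu2, hu1⟩
      filter_upwards [hmem] with u hu
      rw [lem1 1 u hu.1 (by exact_mod_cast hu.2.le)]
    have huniv := partL.union partR
    rw [Iic_union_Ici] at huniv
    have := hasDerivWithinAt_univ.mp huniv
    rw [hF0]
    exact this
  · -- t > 0 : interior point of a long enough interval
    set N : ℕ := ⌊t⌋₊ + 2 with hNdef
    have htN : t < N := by
      have := Nat.lt_floor_add_one t
      rw [hNdef]
      push_cast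
      linarith
    have htmem : t ∈ Icc (0:ℝ) N := ⟨ht, htN.le⟩
    have hd1 := (hsolD N t htmem).hasDerivAt (Icc_mem_nhds h0 htN)
    have hev : F =ᶠ[𝓝 t] sol N := by
      filter_upwards [Ioo_mem_nhds h0 htN] with u hu
      exact lem1 N u hu.1.le hu.2.le
    have := hd1.congr_of_eventuallyEq hev
    rwa [lem1 N t ht htN.le]

end DampedPPAux


/-- Instability of the equilibrium `(δ/α, 0)` when `γδ > ασ`: there is an `r > 0` such
that arbitrarily close to `(δ/α, 0)` there start solutions of the damped predator–prey
system that leave the ball of radius `r` around `(δ/α, 0)` at some time `t ≥ 0`. -/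
theorem damped_pp_extinction_equilibrium_unstable
    (α β γ δ σ a : ℝ)
    (hα : 0 < α) (hβ : 0 < β) (hγ : 0 < γ) (hδ : 0 < δ) (hσ : 0 < σ)
    (hR : γ * δ > α * σ) (hadef : a = γ * δ / σ - α) :
    ∃ r > 0, ∀ ε > 0, ∃ x y : ℝ → ℝ,
      (∀ t, 0 ≤ t → HasDerivAt x (δ - α * x t - β * x t * y t) t) ∧
      (∀ t, 0 ≤ t → HasDerivAt y (γ * x t * y t - σ * y t) t) ∧
      ‖(x 0, y 0) - ((δ / α : ℝ), (0 : ℝ))‖ < ε ∧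
      ∃ t, 0 ≤ t ∧ r ≤ ‖(x t, y t) - ((δ / α : ℝ), (0 : ℝ))‖ := by
  set xb : ℝ := δ / α with hxbdef
  have hxb : 0 < xb := by positivity
  have hgap : σ / γ < xb := by
    rw [hxbdef, div_lt_div_iff₀ hγ hα]
    nlinarith
  set r : ℝ := (xb - σ / γ) / 2 with hrdef
  have hr : 0 < r := by rw [hrdef]; linarith
  refine ⟨r, hr, ?_⟩
  intro ε hε
  set y0 : ℝ := min ε r / 2 with hy0def
  have hy0 : 0 < y0 := by rw [hy0def]; positivity
  have hy0ε : y0 < ε := by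
    rw [hy0def]
    have : min ε r ≤ ε := min_le_left _ _
    linarith
  have hy0r : y0 < r := by
    rw [hy0def]
    have : min ε r ≤ r := min_le_right _ _
    linarith
  obtain ⟨F, hF0, hFd⟩ := DampedPPAux.exists_global hα hβ hγ hδ hσ hy0
  refine ⟨fun t => (F t).1, fun t => (F t).2, ?_, ?_, ?_, ?_⟩
  · intro t ht
    simpa [DampedPPAux.vf, Function.comp_def] using
      (ContinuousLinearMap.fst ℝ ℝ ℝ).hasFDerivAt.comp_hasDerivAt t (hFd t ht)
  · intro t ht
    simpa [DampedPPAux.vf, Function.comp_def] using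
      (ContinuousLinearMap.snd ℝ ℝ ℝ).hasFDerivAt.comp_hasDerivAt t (hFd t ht)
  · have h2 : (((δ / α : ℝ), y0) : ℝ × ℝ) - ((δ / α : ℝ), (0:ℝ)) = ((0:ℝ), y0) := by
      ext <;> simp
    show ‖((F 0).1, (F 0).2) - ((δ / α : ℝ), (0:ℝ))‖ < ε
    rw [show (((F 0).1, (F 0).2) : ℝ × ℝ) = F 0 from rfl, hF0, h2, Prod.norm_def]
    simp only [norm_zero, Real.norm_eq_abs, abs_of_pos hy0]
    rw [max_eq_right hy0.le]
    exact hy0ε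
  · -- the exit time
    set c : ℝ := γ * r with hcdef
    have hc : 0 < c := by rw [hcdef]; positivity
    set T : ℝ := max 0 (Real.log (r / y0) / c + 1) with hTdef
    have hT : 0 ≤ T := le_max_left _ _
    have hkey : r < y0 * Real.exp (c * T) := by
      have h1 : Real.log (r / y0) / c + 1 ≤ T := le_max_right _ _
      have h2 : Real.log (r / y0) + c ≤ c * T := by
        have := mul_le_mul_of_nonneg_left h1 hc.le
        calc Real.log (r / y0) + c = c * (Real.log (r / y0) / c + 1) := by
              field_simp
          _ ≤ c * T := this
      have h3 : r / y0 * Real.exp c ≤ Real.exp (c * T) := by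
        rw [← Real.exp_log (show (0:ℝ) < r / y0 by positivity), ← Real.exp_add]
        exact Real.exp_le_exp.mpr h2
      have h4 : r / y0 < r / y0 * Real.exp c := by
        have hexp : 1 < Real.exp c := Real.one_lt_exp_iff.mpr hc
        have hpos : (0:ℝ) < r / y0 := by positivity
        nlinarith
      have h5 : r / y0 < Real.exp (c * T) := lt_of_lt_of_le h4 h3
      calc r = y0 * (r / y0) := by field_simp
        _ < y0 * Real.exp (c * T) := by
            exact mul_lt_mul_of_pos_left h5 hy0
    by_contra hcon
    push_neg at hcon
    have hball : ∀ t, 0 ≤ t → ‖((F t).1, (F t).2) - ((δ / α : ℝ), (0:ℝ))‖ < r :=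
      fun t ht => hcon t ht
    have hsolT : ∀ t ∈ Set.Icc 0 T, HasDerivWithinAt F (DampedPPAux.vf α β γ δ σ (F t)) (Set.Icc 0 T) t :=
      fun t ht => (hFd t ht.1).hasDerivWithinAt
    have hap := DampedPPAux.apriori hα hβ hγ hδ hσ hT hy0 hF0 hsolT
    -- bounds on x from the ball assumption
    have hxlow : ∀ t, 0 ≤ t → xb - r < (F t).1 := by
      intro t ht
      have h1 := hball t ht
      have h2 : |(F t).1 - xb| ≤ ‖((F t).1, (F t).2) - ((δ / α : ℝ), (0:ℝ))‖ := by
        rw [Prod.norm_def]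
        refine le_trans ?_ (le_max_left _ _)
        apply le_of_eq
        rw [hxbdef]
        simp [Real.norm_eq_abs]
      have := abs_lt.mp (lt_of_le_of_lt h2 h1)
      linarith [this.1]
    -- Gronwall lower bound for y while inside the ball
    have hyc : ContinuousOn (fun t => (F t).2) (Set.Icc 0 T) :=
      fun t ht => (DampedPPAux.hasDerivWithinAt_snd (hsolT t ht)).continuousWithinAt
    have key := le_gronwallBound_of_liminf_deriv_right_le
      (f := fun u => -(F u).2) (f' := fun u => -(γ * (F u).1 * (F u).2 - σ * (F u).2))
      (δ := -y0) (K := c) (ε := 0) (a := 0) (b := T)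
      hyc.neg
      (fun u hu rr hrr => by
        have hder : HasDerivWithinAt (fun w => -(F w).2)
            (-(γ * (F u).1 * (F u).2 - σ * (F u).2)) (Set.Ici u) u := by
          have h1 : HasDerivWithinAt (fun w => (F w).2)
              (γ * (F u).1 * (F u).2 - σ * (F u).2) (Set.Icc 0 T) u := by
            simpa [DampedPPAux.vf] using DampedPPAux.hasDerivWithinAt_snd (hsolT u ⟨hu.1, hu.2.le⟩)
          exact (h1.mono_of_mem_nhdsWithin (DampedPPAux.Icc_mem_nhdsWithin_Ici' hu)).neg
        have := hder.liminf_right_slope_le hrr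
        refine this.mono fun z hz => ?_
        rwa [slope_def_field, div_eq_inv_mul] at hz)
      (by show -(F 0).2 ≤ -y0; rw [hF0])
      (fun u hu => by
        have hyu := (hap u ⟨hu.1, hu.2.le⟩).2.1
        have hxu := hxlow u hu.1
        have hfac : c ≤ γ * (F u).1 - σ := by
          have : γ * (xb - r) - σ = c := by
            rw [hcdef, hrdef, hxbdef]
            field_simp
            ring
          nlinarith
        have hmul : c * (F u).2 ≤ (γ * (F u).1 - σ) * (F u).2 :=
          mul_le_mul_of_nonneg_right hfac hyu.le
        show -(γ * (F u).1 * (F u).2 - σ * (F u).2) ≤ c * -(F u).2 + 0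
        nlinarith)
    have hT2 := key T ⟨hT, le_rfl⟩
    rw [gronwallBound_ε0, sub_zero] at hT2
    have hT2' : -(F T).2 ≤ -y0 * Real.exp (c * T) := hT2
    have hyT : y0 * Real.exp (c * T) ≤ (F T).2 := by nlinarith [Real.exp_pos (c * T)]
    have hyTr : (F T).2 < r := by
      have h1 := hball T hT
      have h2 : |(F T).2| ≤ ‖((F T).1, (F T).2) - ((δ / α : ℝ), (0:ℝ))‖ := by
        rw [Prod.norm_def]
        refine le_trans ?_ (le_max_right _ _)
        apply le_of_eq
        simp [Real.norm_eq_abs]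
      have := lt_of_le_of_lt h2 h1
      exact lt_of_le_of_lt (le_abs_self _) this
    linarith
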